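/- Let c > 0 and let α : (−∞, T] → ℝ be differentiable with α(τ) < 0 for all τ, α(τ) → 0 as τ → −∞, and suppose α satisfies α'(τ) = −c α(τ)² + E(τ) where |E(τ)| ≤ ε(τ) α(τ)² with ε(τ) → 0 as τ → −∞. Then α(τ) = −1/(c|τ|) + o(1/|τ|) as τ → −∞. -/

import Mathlib

open Filter

theorem stmt7 (c T : ℝ) (hc : 0 < c) (α E ε : ℝ → ℝ)
    (hneg : ∀ τ ≤ T, α τ < 0)
    (hlim : Filter.Tendsto α Filter.atBot (nhds 0))
    (hode : ∀ τ ≤ T, HasDerivAt α (-c * (α τ) ^ 2 + E τ) τ)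
    (hE : ∀ τ ≤ T, |E τ| ≤ ε τ * (α τ) ^ 2)
    (hε : Filter.Tendsto ε Filter.atBot (nhds 0)) :
    Filter.Tendsto (fun τ => |τ| * (α τ + 1 / (c * |τ|))) Filter.atBot (nhds 0) := by
  set γ : ℝ → ℝ := fun t => -(α t)⁻¹ + c * t with hγdef
  have hγderiv : ∀ τ ≤ T, HasDerivAt γ (E τ / (α τ) ^ 2) τ := by
    intro τ hτ
    have h0 : α τ ≠ 0 := (hneg τ hτ).ne
    have h1 : HasDerivAt (fun t => -(α t)⁻¹) (-(-(-c * (α τ) ^ 2 + E τ) / (α τ) ^ 2)) τ :=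
      ((hode τ hτ).inv h0).neg
    have h2 : HasDerivAt (fun t : ℝ => c * t) c τ := by
      simpa using (hasDerivAt_id τ).const_mul c
    have h3 := h1.add h2
    refine h3.congr_deriv ?_
    field_simp
    ring
  -- key: γ τ / τ → 0
  have key : Tendsto (fun τ => γ τ / τ) atBot (nhds 0) := by
    rw [Metric.tendsto_nhds]
    intro δ hδ
    set δ' := δ / 3 with hδ'def
    have hδ' : 0 < δ' := by positivity
    obtain ⟨T₀, hT₀⟩ := eventually_atBot.mp (Metric.tendsto_nhds.mp hε δ' hδ')
    set T₁ : ℝ := min T (min T₀ (-1)) with hT₁def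
    have hT₁T : T₁ ≤ T := min_le_left _ _
    have hT₁T₀ : T₁ ≤ T₀ := le_trans (min_le_right _ _) (min_le_left _ _)
    have hT₁neg : T₁ ≤ -1 := le_trans (min_le_right _ _) (min_le_right _ _)
    set A := |γ T₁| with hAdef
    -- mean value bound
    have hmvt : ∀ τ ≤ T₁, |γ τ| ≤ A + δ' * (T₁ - τ) := by
      intro τ hτ
      have hd : ∀ x ∈ Set.Icc τ T₁, HasDerivWithinAt γ (E x / (α x) ^ 2) (Set.Icc τ T₁) x := by
        intro x hx
        exact (hγderiv x (le_trans hx.2 hT₁T)).hasDerivWithinAt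
      have hb : ∀ x ∈ Set.Icc τ T₁, ‖E x / (α x) ^ 2‖ ≤ δ' := by
        intro x hx
        have hxT : x ≤ T := le_trans hx.2 hT₁T
        have hα0 : α x ≠ 0 := (hneg x hxT).ne
        have hα2 : (0:ℝ) < (α x) ^ 2 := by positivity
        have hεx : |ε x| < δ' := by
          have := hT₀ x (le_trans hx.2 hT₁T₀)
          rwa [Real.dist_eq, sub_zero] at this
        have h6 : |E x| ≤ ε x * (α x) ^ 2 := hE x hxT
        have h7 : ε x ≤ |ε x| := le_abs_self _
        have : ‖E x / (α x) ^ 2‖ = |E x| / (α x) ^ 2 := by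
          rw [Real.norm_eq_abs, abs_div, abs_of_pos hα2]
        rw [this, div_le_iff₀ hα2]
        nlinarith
      have h4 : |γ T₁ - γ τ| ≤ δ' * (T₁ - τ) := by
        simpa using norm_image_sub_le_of_norm_deriv_le_segment' hd (fun x hx => hb x (Set.Ico_subset_Icc_self hx)) T₁
          (Set.right_mem_Icc.mpr hτ)
      have h5 : |γ τ| - |γ T₁| ≤ |γ τ - γ T₁| := abs_sub_abs_le_abs_sub _ _
      rw [abs_sub_comm] at h4
      linarith
    refine eventually_atBot.mpr ⟨min T₁ (-(A / δ' + 1)), ?_⟩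
    intro τ hτ
    have hτT₁ : τ ≤ T₁ := le_trans hτ (min_le_left _ _)
    have hτA : τ ≤ -(A / δ' + 1) := le_trans hτ (min_le_right _ _)
    have hγb := hmvt τ hτT₁
    have hA0 : 0 ≤ A := abs_nonneg _
    have hτneg : τ ≤ -1 := le_trans hτT₁ hT₁neg
    rw [Real.dist_eq, sub_zero, abs_div]
    have hab : |τ| = -τ := abs_of_neg (by linarith)
    rw [hab, div_lt_iff₀ (by linarith)]
    have hT₁0 : T₁ ≤ 0 := by linarith
    have hAd : A / δ' + 1 ≤ -τ := by linarith
    have h2 : A < 2 * δ' * (-τ) := by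
      have := mul_le_mul_of_nonneg_left hAd hδ'.le
      have hA' : δ' * (A / δ') = A := by field_simp
      nlinarith
    have hδ3 : δ = 3 * δ' := by rw [hδ'def]; ring
    nlinarith
  -- from key: τ * α τ → 1/c
  have hev : ∀ᶠ τ in (atBot : Filter ℝ), τ ≤ T ∧ τ < 0 :=
    (eventually_le_atBot T).and (eventually_lt_atBot 0)
  have key2 : Tendsto (fun τ => τ * α τ) atBot (nhds (1 / c)) := by
    have hβ : Tendsto (fun τ => -(α τ)⁻¹ / τ) atBot (nhds (-c)) := by
      have : Tendsto (fun τ => γ τ / τ - c) atBot (nhds (0 - c)) :=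
        key.sub_const c
      rw [zero_sub] at this
      refine this.congr' ?_
      filter_upwards [hev] with τ hτ
      have hτ0 : τ ≠ 0 := hτ.2.ne
      show (-(α τ)⁻¹ + c * τ) / τ - c = -(α τ)⁻¹ / τ
      rw [add_div, mul_div_assoc, div_self hτ0, mul_one, add_sub_cancel_right]
    have hinv : Tendsto (fun τ => -(-(α τ)⁻¹ / τ)⁻¹) atBot (nhds (-(-c)⁻¹)) :=
      (hβ.inv₀ (by simpa using hc.ne')).neg
    have hval : -(-c)⁻¹ = 1 / c := by field_simp
    rw [hval] at hinv
    refine hinv.congr' ?_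
    filter_upwards [hev] with τ hτ
    have hα0 : α τ ≠ 0 := (hneg τ hτ.1).ne
    have hτ0 : τ ≠ 0 := hτ.2.ne
    field_simp
  -- conclude
  have hfin : Tendsto (fun τ => -(τ * α τ) + 1 / c) atBot (nhds 0) := by
    have := key2.neg.add_const (1 / c)
    simpa using this
  refine hfin.congr' ?_
  filter_upwards [hev] with τ hτ
  have h1 : |τ| = -τ := abs_of_neg hτ.2
  have hτ0 : τ ≠ 0 := hτ.2.ne
  rw [h1]
  field_simp
  ring
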